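/- Let γ = (γ₁, …, γ_ℓ) be a weakly decreasing sequence of integers and δ = (δ₁, …, δ_ℓ) a weakly increasing sequence of integers, and let ε be any permutation (rearrangement) of the sequence δ. Then sort(γ + ε) ⪰ sort(γ + δ) in dominance order, where γ + ε denotes the componentwise sum and sort(C) denotes the weakly decreasing rearrangement of the sequence C. -/

import Mathlib

open scoped BigOperators

/-- `conj f j` is the number of indices `i` with `f i > j`, i.e. the length of the
`(j+1)`-st column of the Young diagram of `f` (0-indexed conjugate partition). -/
noncomputable def conj (f : ℕ → ℕ) (j : ℕ) : ℕ := Nat.card {i : ℕ | j < f i}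

/-- `f` is a partition: weakly decreasing with finitely many nonzero parts
(0-indexed: the `(i+1)`-st part is `f i`). -/
def IsPartition (f : ℕ → ℕ) : Prop := Antitone f ∧ ∃ N, ∀ i, N ≤ i → f i = 0

/-- the number of nonzero parts of `f` -/
noncomputable def len (f : ℕ → ℕ) : ℕ := Nat.card {i : ℕ | f i ≠ 0}

/-- the sum of the parts, `|f|` -/
noncomputable def wt (f : ℕ → ℕ) : ℕ := ∑ᶠ i, f i

/-- `R` is the weakly decreasing rearrangement of the (multiset of nonzero) values of `f`:
`R` is a partition and, for every threshold `t`, `R` has as many parts `> t` as `f` does. -/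
def IsSortOf (R f : ℕ → ℕ) : Prop := IsPartition R ∧ ∀ t, conj R t = conj f t

/-- `γ = μ ∪ ν` : `γ` is the decreasing rearrangement of all the parts of `μ` and `ν`
together: for every threshold `t`, the number of parts of `γ` that are `> t` equals the
number of such parts of `μ` plus the number of such parts of `ν`. -/
def IsUnion (γ μ ν : ℕ → ℕ) : Prop := IsPartition γ ∧ ∀ t, conj γ t = conj μ t + conj ν t

/-- `(l, r) = (μ, ν)~` : with `γ₁ ≥ γ₂ ≥ ⋯` the decreasing rearrangement of all the parts
of `μ` and `ν`, `l = (γ₁, γ₃, γ₅, …)` and `r = (γ₂, γ₄, γ₆, …)` (0-indexed below). -/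
def IsTilde (μ ν l r : ℕ → ℕ) : Prop :=
  ∃ γ : ℕ → ℕ, IsUnion γ μ ν ∧ (∀ i, l i = γ (2 * i)) ∧ (∀ i, r i = γ (2 * i + 1))

/-- dominance order `θ ⪰ π`: every initial partial sum of `θ` is at least that of `π`. -/
def Dominates (θ π : ℕ → ℕ) : Prop :=
  ∀ k, ∑ i ∈ Finset.range k, π i ≤ ∑ i ∈ Finset.range k, θ i

/-- the complete homogeneous symmetric polynomial `h_k` in `n` variables,
with the convention `h_k = 0` for `k < 0`. -/
noncomputable def hpoly (n : ℕ) (k : ℤ) : MvPolynomial (Fin n) ℤ :=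
  if 0 ≤ k then MvPolynomial.hsymm (Fin n) ℤ k.toNat else 0

/-- the skew Schur polynomial `s_{μ/α}` in `n` variables, defined by the
Jacobi–Trudi determinant `det (h_{μ_i - α_j - i + j})`. -/
noncomputable def skewSchur (n : ℕ) (μ α : ℕ → ℕ) : MvPolynomial (Fin n) ℤ :=
  Matrix.det (Matrix.of fun i j : Fin (len μ) =>
    hpoly n ((μ (i : ℕ) : ℤ) - (α (j : ℕ) : ℤ) - ((i : ℕ) : ℤ) + ((j : ℕ) : ℤ)))

/-- the Schur polynomial `s_μ` in `n` variables. -/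
noncomputable def schur (n : ℕ) (μ : ℕ → ℕ) : MvPolynomial (Fin n) ℤ :=
  skewSchur n μ (fun _ => 0)

/-- A symmetric function, given as the compatible family of its truncations to `n`
variables for every `n`, is Schur-positive if it is a linear combination of Schur
functions with nonnegative integer coefficients. -/
def SchurPositive (F : ∀ n : ℕ, MvPolynomial (Fin n) ℤ) : Prop :=
  ∃ c : (ℕ → ℕ) → ℕ, (Function.support c).Finite ∧
    (∀ θ, c θ ≠ 0 → IsPartition θ) ∧
    ∀ n, F n = ∑ᶠ θ : ℕ → ℕ, (c θ : ℤ) • schur n θ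

/-- `c` is the family of coefficients in the Schur expansion of `s_μ s_ν`,
i.e. the Littlewood–Richardson coefficients `c θ = c^θ_{μν}`. -/
def IsSchurExpansionOfProduct (μ ν : ℕ → ℕ) (c : (ℕ → ℕ) → ℤ) : Prop :=
  (Function.support c).Finite ∧ (∀ θ, c θ ≠ 0 → IsPartition θ) ∧
    ∀ n, schur n μ * schur n ν = ∑ᶠ θ : ℕ → ℕ, c θ • schur n θ

/-- `c` is the family of coefficients in the Schur expansion of `s_{μ/α} s_{ν/β}`. -/
def IsSchurExpansionOfSkewProduct (μ α ν β : ℕ → ℕ) (c : (ℕ → ℕ) → ℤ) : Prop :=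
  (Function.support c).Finite ∧ (∀ θ, c θ ≠ 0 → IsPartition θ) ∧
    ∀ n, skewSchur n μ α * skewSchur n ν β = ∑ᶠ θ : ℕ → ℕ, c θ • schur n θ

/-- a hook partition `(j, 1^k)`, `j ≥ 1`: nonempty, and all parts after the first are ≤ 1. -/
def IsHook (f : ℕ → ℕ) : Prop := IsPartition f ∧ 1 ≤ f 0 ∧ ∀ i, 1 ≤ i → f i ≤ 1

/-- `s` is the weakly decreasing rearrangement of the first `L` entries of the integer
sequence `f`: `s` is weakly decreasing on positions `< L` and, for every threshold `t`,
has as many entries `> t` among its first `L` positions as `f` does. -/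
def IsSortOfLenInt (L : ℕ) (s f : ℕ → ℤ) : Prop :=
  (∀ i j, i ≤ j → j < L → s j ≤ s i) ∧
  ∀ t : ℤ, ((Finset.range L).filter (fun i => t < s i)).card
      = ((Finset.range L).filter (fun i => t < f i)).card

lemma max_exchange (a b c d t : ℤ) (hab : b ≤ a) (hcd : c ≤ d) :
    max (b + d - t) 0 + max (a + c - t) 0 ≤ max (b + c - t) 0 + max (a + d - t) 0 := by
  simp only [max_def]
  split_ifs <;> omega

/-- exchange argument: the aligned pairing minimizes `∑ max(γ i + δ (σ i) - t) 0`. -/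
lemma key_exchange (L : ℕ) (γ δ : ℕ → ℤ) (t : ℤ)
    (hγ : ∀ i j, i ≤ j → j < L → γ j ≤ γ i)
    (hδ : ∀ i j, i ≤ j → j < L → δ i ≤ δ j) :
    ∀ (n : ℕ) (σ : ℕ → ℕ), Set.BijOn σ (Set.Iio L) (Set.Iio L) →
      ((Finset.range L).filter (fun m => σ m ≠ m)).card ≤ n →
      ∑ i ∈ Finset.range L, max (γ i + δ i - t) 0 ≤
        ∑ i ∈ Finset.range L, max (γ i + δ (σ i) - t) 0 := by
  intro n
  induction n with
  | zero =>
    intro σ hσ hcard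
    have hfix : ∀ m ∈ Finset.range L, σ m = m := by
      intro m hm
      by_contra h
      have : m ∈ (Finset.range L).filter (fun m => σ m ≠ m) := by
        simp [hm, h]
      have := Finset.card_pos.mpr ⟨m, this⟩
      omega
    exact le_of_eq (Finset.sum_congr rfl fun m hm => by rw [hfix m hm])
  | succ n ih =>
    intro σ hσ hcard
    by_cases h0 : ∀ m ∈ Finset.range L, σ m = m
    · exact le_of_eq (Finset.sum_congr rfl fun m hm => by rw [h0 m hm])
    · push_neg at h0
      obtain ⟨m₀, hm₀L, hm₀⟩ := h0
      have hex : ∃ m, m < L ∧ σ m ≠ m := ⟨m₀, Finset.mem_range.mp hm₀L, hm₀⟩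
      classical
      set i := Nat.find hex with hi
      obtain ⟨hiL, hiσ⟩ : i < L ∧ σ i ≠ i := Nat.find_spec hex
      have hmin : ∀ m, m < i → m < L → σ m = m := by
        intro m hmi hmL
        have := Nat.find_min hex hmi
        push_neg at this
        exact this hmL
      have hσiL : σ i < L := hσ.mapsTo hiL
      -- i < σ i
      have hiσi : i < σ i := by
        rcases lt_trichotomy (σ i) i with h | h | h
        · exfalso
          have h1 : σ (σ i) = σ i := hmin _ h hσiL
          have := hσ.injOn (Set.mem_Iio.mpr hσiL) (Set.mem_Iio.mpr hiL) h1
          omega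
        · exact absurd h hiσ
        · exact h
      -- j with σ j = i
      obtain ⟨j, hjL', hji⟩ := hσ.surjOn (Set.mem_Iio.mpr hiL)
      have hjL : j < L := hjL'
      have hij : i < j := by
        rcases lt_trichotomy j i with h | h | h
        · exfalso; have := hmin _ h hjL; omega
        · exfalso; rw [h] at hji; exact hiσ hji
        · exact h
      -- the swapped permutation
      set σ' : ℕ → ℕ := fun m => σ (Equiv.swap i j m) with hσ'def
      have hswap : Set.BijOn (fun m => (Equiv.swap i j m : ℕ)) (Set.Iio L) (Set.Iio L) := by
        refine ⟨?_, (Equiv.injective _).injOn, ?_⟩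
        · intro m hm
          rcases eq_or_ne m i with rfl | h1
          · simpa [Equiv.swap_apply_left] using hjL
          rcases eq_or_ne m j with rfl | h2
          · simpa [Equiv.swap_apply_right] using hiL
          · simpa [Equiv.swap_apply_of_ne_of_ne h1 h2] using hm
        · intro y hy
          refine ⟨Equiv.swap i j y, ?_, by simp⟩
          rcases eq_or_ne y i with rfl | h1
          · simpa [Equiv.swap_apply_left] using hjL
          rcases eq_or_ne y j with rfl | h2
          · simpa [Equiv.swap_apply_right] using hiL
          · simpa [Equiv.swap_apply_of_ne_of_ne h1 h2] using hy
      have hσ' : Set.BijOn σ' (Set.Iio L) (Set.Iio L) := hσ.comp hswap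
      have hσ'i : σ' i = i := by simp [hσ'def, Equiv.swap_apply_left, hji]
      have hσ'j : σ' j = σ i := by simp [hσ'def, Equiv.swap_apply_right]
      have hσ'other : ∀ m, m ≠ i → m ≠ j → σ' m = σ m := by
        intro m h1 h2; simp [hσ'def, Equiv.swap_apply_of_ne_of_ne h1 h2]
      -- card decreases
      have hsub : (Finset.range L).filter (fun m => σ' m ≠ m) ⊂
          (Finset.range L).filter (fun m => σ m ≠ m) := by
        constructor
        · intro m hm
          simp only [Finset.mem_filter, Finset.mem_range] at hm ⊢
          obtain ⟨hmL, hmne⟩ := hm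
          refine ⟨hmL, ?_⟩
          rcases eq_or_ne m i with rfl | h1
          · exact absurd hσ'i hmne
          rcases eq_or_ne m j with rfl | h2
          · intro h; rw [h] at hji; omega
          · rw [hσ'other m h1 h2] at hmne; exact hmne
        · intro hsup
          have : i ∈ (Finset.range L).filter (fun m => σ' m ≠ m) := by
            apply hsup; simp [hiL, hiσ]
          simp [hσ'i] at this
      have hcard' : ((Finset.range L).filter (fun m => σ' m ≠ m)).card ≤ n := by
        have := Finset.card_lt_card hsub
        omega
      refine le_trans (ih σ' hσ' hcard') ?_
      -- now compare σ' and σ sums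
      have hji' : i ≠ j := Nat.ne_of_lt hij
      have hjmem : j ∈ (Finset.range L).erase i := by
        simp [Finset.mem_erase, hjL, Ne.symm hji']
      have himem : i ∈ Finset.range L := Finset.mem_range.mpr hiL
      have expand : ∀ g : ℕ → ℤ,
          ∑ m ∈ ((Finset.range L).erase i).erase j, g m + g j + g i
            = ∑ m ∈ Finset.range L, g m := by
        intro g
        rw [Finset.sum_erase_add _ _ hjmem, Finset.sum_erase_add _ _ himem]
      rw [← expand (fun m => max (γ m + δ (σ' m) - t) 0),
          ← expand (fun m => max (γ m + δ (σ m) - t) 0)]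
      have hrest : ∑ m ∈ ((Finset.range L).erase i).erase j, max (γ m + δ (σ' m) - t) 0
          = ∑ m ∈ ((Finset.range L).erase i).erase j, max (γ m + δ (σ m) - t) 0 := by
        apply Finset.sum_congr rfl
        intro m hm
        simp only [Finset.mem_erase] at hm
        rw [hσ'other m hm.2.1 hm.1]
      rw [hrest]
      have hkey : max (γ j + δ (σ' j) - t) 0 + max (γ i + δ (σ' i) - t) 0 ≤
          max (γ j + δ (σ j) - t) 0 + max (γ i + δ (σ i) - t) 0 := by
        rw [hσ'i, hσ'j, hji]
        -- need: max (γ j + δ (σ i) - t) 0 + max (γ i + δ i - t) 0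
        --     ≤ max (γ j + δ i - t) 0 + max (γ i + δ (σ i) - t) 0
        have hab : γ j ≤ γ i := hγ i j (le_of_lt hij) hjL
        have hcd : δ i ≤ δ (σ i) := hδ i (σ i) (le_of_lt hiσi) hσiL
        exact max_exchange (γ i) (γ j) (δ i) (δ (σ i)) t hab hcd
      omega

lemma count_to_P (L : ℕ) (s f : ℕ → ℤ)
    (h : ∀ t : ℤ, ((Finset.range L).filter (fun i => t < s i)).card
        = ((Finset.range L).filter (fun i => t < f i)).card) (t : ℤ) :
    ∑ i ∈ Finset.range L, max (s i - t) 0 = ∑ i ∈ Finset.range L, max (f i - t) 0 := by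
  classical
  set B : ℤ := (((Finset.range L).sup fun i => (max (s i) (f i)).toNat + 1 : ℕ) : ℤ) with hB
  have hBs : ∀ i ∈ Finset.range L, s i < B ∧ f i < B := by
    intro i hi
    have h1 : (max (s i) (f i)).toNat + 1 ≤ (Finset.range L).sup
        (fun i => (max (s i) (f i)).toNat + 1) :=
      Finset.le_sup (f := fun i => (max (s i) (f i)).toNat + 1) hi
    have h2 : max (s i) (f i) ≤ ((max (s i) (f i)).toNat : ℤ) := Int.self_le_toNat _
    constructor <;> [skip; skip] <;>
      · rw [hB]
        have := le_max_left (s i) (f i)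
        have := le_max_right (s i) (f i)
        omega
  have key : ∀ g : ℕ → ℤ, (∀ i ∈ Finset.range L, g i < B) →
      ∑ i ∈ Finset.range L, max (g i - t) 0
        = ∑ j ∈ Finset.Ico t B, (((Finset.range L).filter (fun i => j < g i)).card : ℤ) := by
    intro g hg
    have step : ∀ i ∈ Finset.range L,
        max (g i - t) 0 = (((Finset.Ico t B).filter (fun j => j < g i)).card : ℤ) := by
      intro i hi
      have : (Finset.Ico t B).filter (fun j => j < g i) = Finset.Ico t (min B (g i)) := by
        ext j
        simp only [Finset.mem_filter, Finset.mem_Ico, lt_min_iff]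
        tauto
      rw [this, Int.card_Ico]
      have := hg i hi
      rcases le_or_gt (g i) t with hle | hlt
      · rw [min_eq_right (le_of_lt this)]
        omega
      · rw [min_eq_right (le_of_lt this)]
        omega
    rw [Finset.sum_congr rfl step]
    -- double counting
    simp only [Finset.card_filter]
    push_cast
    rw [Finset.sum_comm]
  rw [key s (fun i hi => (hBs i hi).1), key f (fun i hi => (hBs i hi).2)]
  exact Finset.sum_congr rfl fun j _ => by rw [h j]

lemma prefix_upper (L k : ℕ) (s : ℕ → ℤ) (hk : k ≤ L) (t : ℤ) :
    ∑ i ∈ Finset.range k, s i ≤ k * t + ∑ i ∈ Finset.range L, max (s i - t) 0 := by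
  have h1 : ∑ i ∈ Finset.range k, s i ≤ ∑ i ∈ Finset.range k, (t + max (s i - t) 0) := by
    apply Finset.sum_le_sum
    intro i _
    have := le_max_left (s i - t) (0 : ℤ)
    omega
  have h2 : ∑ i ∈ Finset.range k, (t + max (s i - t) 0)
      = k * t + ∑ i ∈ Finset.range k, max (s i - t) 0 := by
    rw [Finset.sum_add_distrib, Finset.sum_const, Finset.card_range, nsmul_eq_mul]
  have h3 : ∑ i ∈ Finset.range k, max (s i - t) 0 ≤ ∑ i ∈ Finset.range L, max (s i - t) 0 := by
    apply Finset.sum_le_sum_of_subset_of_nonneg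
    · exact Finset.range_subset_range.mpr hk
    · intro i _ _; exact le_max_right _ _
  omega

lemma prefix_lower (L k : ℕ) (s : ℕ → ℤ) (hs : ∀ i j, i ≤ j → j < L → s j ≤ s i)
    (hk1 : 1 ≤ k) (hkL : k ≤ L) :
    (k : ℤ) * s (k - 1) + ∑ i ∈ Finset.range L, max (s i - s (k - 1)) 0
      ≤ ∑ i ∈ Finset.range k, s i := by
  set t := s (k - 1) with ht
  have hsplit : Finset.range L = Finset.range k ∪ Finset.Ico k L := by
    rw [Finset.range_eq_Ico, Finset.range_eq_Ico]
    exact (Finset.Ico_union_Ico_eq_Ico (Nat.zero_le k) hkL).symm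
  have hdisj : Disjoint (Finset.range k) (Finset.Ico k L) := by
    simp [Finset.disjoint_left, Finset.mem_range, Finset.mem_Ico]
    omega
  rw [hsplit, Finset.sum_union hdisj]
  have h1 : ∑ i ∈ Finset.Ico k L, max (s i - t) 0 = 0 := by
    apply Finset.sum_eq_zero
    intro i hi
    simp only [Finset.mem_Ico] at hi
    have : s i ≤ t := hs (k - 1) i (by omega) hi.2
    exact max_eq_right (by omega)
  have h2 : ∑ i ∈ Finset.range k, max (s i - t) 0 = ∑ i ∈ Finset.range k, (s i - t) := by
    apply Finset.sum_congr rfl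
    intro i hi
    simp only [Finset.mem_range] at hi
    have : t ≤ s i := hs i (k - 1) (by omega) (by omega)
    rw [max_eq_left]; omega
  rw [h1, h2, Finset.sum_sub_distrib, Finset.sum_const, Finset.card_range, nsmul_eq_mul]
  omega

/-- Lemma 16(ii): if `γ` is weakly decreasing, `δ` is weakly increasing,
and `ε` is a rearrangement of `δ` (all of length `L`), then
`sort(γ + ε) ⪰ sort(γ + δ)` in dominance order. -/
theorem stmt17 (L : ℕ) (γ δ ε sε sδ : ℕ → ℤ) (π : ℕ → ℕ)
    (hγ : ∀ i j, i ≤ j → j < L → γ j ≤ γ i)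
    (hδ : ∀ i j, i ≤ j → j < L → δ i ≤ δ j)
    (hπ : Set.BijOn π (Set.Iio L) (Set.Iio L))
    (hε : ∀ i, i < L → ε i = δ (π i))
    (hsε : IsSortOfLenInt L sε (fun i => γ i + ε i))
    (hsδ : IsSortOfLenInt L sδ (fun i => γ i + δ i)) :
    ∀ k, k ≤ L → ∑ i ∈ Finset.range k, sδ i ≤ ∑ i ∈ Finset.range k, sε i := by
  intro k hk
  rcases Nat.eq_zero_or_pos k with rfl | hk1
  · simp
  · set t := sε (k - 1) with ht
    have hPδ := count_to_P L sδ (fun i => γ i + δ i) hsδ.2 t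
    have hPε := count_to_P L sε (fun i => γ i + ε i) hsε.2 t
    have hεδ : ∑ i ∈ Finset.range L, max (γ i + ε i - t) 0
        = ∑ i ∈ Finset.range L, max (γ i + δ (π i) - t) 0 := by
      apply Finset.sum_congr rfl
      intro i hi
      rw [hε i (Finset.mem_range.mp hi)]
    have hkey := key_exchange L γ δ t hγ hδ
      ((Finset.range L).filter (fun m => π m ≠ m)).card π hπ le_rfl
    have h1 := prefix_upper L k sδ hk t
    have h2 := prefix_lower L k sε hsε.1 hk1 hk
    rw [← ht] at h2
    omega
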